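/- Let Z be a standard Gaussian random variable. There exists a constant C > 0 such that for all a ∈ [−1,1] and all b ∈ [0,1], | E[ |e^{a + bZ} − 1| ] − b·√(2/π) | ≤ C·(|a| + b²). -/

import Mathlib

open MeasureTheory ProbabilityTheory
open scoped NNReal ENNReal


-- pointwise lemma L1
lemma L1 (x : ℝ) : |Real.exp x - 1 - x| ≤ x^2 * Real.exp |x| := by
  have hlow : x + 1 ≤ Real.exp x := Real.add_one_le_exp x
  rw [abs_of_nonneg (by linarith)]
  rcases le_or_gt 0 x with hx | hx
  · rw [abs_of_nonneg hx]
    have h1 : (-x) + 1 ≤ Real.exp (-x) := Real.add_one_le_exp _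
    have h2 : Real.exp x * Real.exp (-x) = 1 := by
      rw [← Real.exp_add]; simp
    have h3 : 0 < Real.exp x := Real.exp_pos x
    nlinarith [mul_nonneg hx (sub_nonneg.2 hlow)]
  · rw [abs_of_neg hx]
    have h1 : (-x) + 1 ≤ Real.exp (-x) := Real.add_one_le_exp _
    have h2 : Real.exp x * Real.exp (-x) = 1 := by
      rw [← Real.exp_add]; simp
    have h3 : 0 < Real.exp x := Real.exp_pos x
    have h4 : (1 : ℝ) ≤ Real.exp (-x) := by
      rw [← Real.exp_zero]; exact Real.exp_le_exp.2 (by linarith)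
    nlinarith [sq_nonneg x, mul_pos h3 (Real.exp_pos (-x))]

lemma Labs (t : ℝ) : Real.exp |t| ≤ Real.exp t + Real.exp (-t) := by
  rcases abs_cases t with ⟨h, _⟩ | ⟨h, _⟩ <;> rw [h] <;>
    [linarith [Real.exp_pos (-t)]; linarith [Real.exp_pos t]]

lemma Lsq (t : ℝ) : t^2 ≤ 4 * Real.exp |t| := by
  have h1 : |t|/2 + 1 ≤ Real.exp (|t|/2) := Real.add_one_le_exp _
  have h2 : Real.exp (|t|/2) * Real.exp (|t|/2) = Real.exp |t| := by
    rw [← Real.exp_add]; ring_nf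
  have h3 : 0 ≤ |t| := abs_nonneg t
  nlinarith [sq_abs t, Real.exp_pos (|t|/2)]

lemma P (a b z : ℝ) (ha : |a| ≤ 1) (hb0 : 0 ≤ b) (hb1 : b ≤ 1) :
    |Real.exp (a + b*z) - 1 - (a + b*z)| ≤
      8 * Real.exp 1 * (a^2 + b^2) * (Real.exp (2*z) + Real.exp (-(2*z))) := by
  set x := a + b*z with hx
  have h1 := L1 x
  have h2 : Real.exp |x| ≤ Real.exp 1 * Real.exp |z| := by
    rw [← Real.exp_add]
    apply Real.exp_le_exp.2
    calc |x| ≤ |a| + |b*z| := abs_add_le _ _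
      _ ≤ 1 + |z| := by
          rw [abs_mul, abs_of_nonneg hb0]
          have : b * |z| ≤ 1 * |z| := mul_le_mul_of_nonneg_right hb1 (abs_nonneg z)
          linarith
  have h3 : x^2 ≤ 2*a^2 + 2*b^2*z^2 := by rw [hx]; nlinarith [sq_nonneg (a - b*z)]
  have h4 : z^2 * Real.exp |z| ≤ 4 * Real.exp (2*|z|) := by
    have := Lsq z
    have he : Real.exp |z| * Real.exp |z| = Real.exp (2*|z|) := by
      rw [← Real.exp_add]; ring_nf
    nlinarith [Real.exp_pos |z|]
  have h5 : Real.exp (2*|z|) ≤ Real.exp (2*z) + Real.exp (-(2*z)) := by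
    have := Labs (2*z)
    rwa [show |2*z| = 2*|z| by rw [abs_mul]; norm_num] at this
  have h6 : Real.exp |z| ≤ Real.exp (2*|z|) := Real.exp_le_exp.2 (by linarith [abs_nonneg z])
  have hS : (0:ℝ) < Real.exp (2*z) + Real.exp (-(2*z)) := by positivity
  have hE : (0:ℝ) < Real.exp 1 := Real.exp_pos 1
  have hz : (0:ℝ) ≤ Real.exp |z| := (Real.exp_pos _).le
  calc |Real.exp x - 1 - x| ≤ x^2 * Real.exp |x| := h1
    _ ≤ (2*a^2 + 2*b^2*z^2) * (Real.exp 1 * Real.exp |z|) := by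
        apply mul_le_mul h3 h2 (Real.exp_pos _).le (by positivity)
    _ = Real.exp 1 * (2*a^2 * Real.exp |z| + 2*b^2 * (z^2 * Real.exp |z|)) := by ring
    _ ≤ Real.exp 1 * (2*a^2 * Real.exp (2*|z|) + 2*b^2 * (4 * Real.exp (2*|z|))) := by
        have := sq_nonneg a; have := sq_nonneg b
        gcongr
    _ = Real.exp 1 * (2*a^2 + 8*b^2) * Real.exp (2*|z|) := by ring
    _ ≤ Real.exp 1 * (8*a^2 + 8*b^2) * Real.exp (2*|z|) := by
        have h7 : Real.exp 1 * (2*a^2 + 8*b^2) ≤ Real.exp 1 * (8*a^2 + 8*b^2) :=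
          mul_le_mul_of_nonneg_left (by nlinarith [sq_nonneg a]) hE.le
        exact mul_le_mul_of_nonneg_right h7 (Real.exp_pos _).le
    _ ≤ Real.exp 1 * (8*a^2 + 8*b^2) * (Real.exp (2*z) + Real.exp (-(2*z))) := by
        have : (0:ℝ) ≤ Real.exp 1 * (8*a^2 + 8*b^2) := by positivity
        exact mul_le_mul_of_nonneg_left h5 this
    _ = 8 * Real.exp 1 * (a^2 + b^2) * (Real.exp (2*z) + Real.exp (-(2*z))) := by ring

noncomputable def pdf1 (x : ℝ) : ℝ := (Real.sqrt (2*Real.pi))⁻¹ * Real.exp (-x^2/2)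

lemma pdf1_eq (x : ℝ) : gaussianPDFReal 0 1 x = pdf1 x := by
  simp [gaussianPDFReal, pdf1]

lemma pdf1_nonneg (x : ℝ) : 0 ≤ pdf1 x := by
  unfold pdf1; positivity

lemma pdf1_meas : Measurable pdf1 := by
  unfold pdf1; fun_prop

lemma gauss_eq : gaussianReal 0 1 =
    volume.withDensity (fun x => ENNReal.ofReal (pdf1 x)) := by
  rw [gaussianReal_of_var_ne_zero _ one_ne_zero]
  congr 1
  ext x
  rw [gaussianPDF, pdf1_eq]

lemma integral_gauss (g : ℝ → ℝ) :
    ∫ z, g z ∂(gaussianReal 0 1) = ∫ z, pdf1 z * g z := by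
  rw [gauss_eq]
  have : (fun x => ENNReal.ofReal (pdf1 x)) =
      (fun x => ((fun x => (pdf1 x).toNNReal) x : ℝ≥0∞)) := rfl
  rw [this, integral_withDensity_eq_integral_smul (pdf1_meas.real_toNNReal) g]
  congr 1
  ext x
  rw [NNReal.smul_def, Real.coe_toNNReal _ (pdf1_nonneg x), smul_eq_mul]

lemma integrable_gauss_iff (g : ℝ → ℝ) :
    Integrable g (gaussianReal 0 1) ↔ Integrable (fun z => pdf1 z * g z) := by
  rw [gauss_eq]
  have : (fun x => ENNReal.ofReal (pdf1 x)) =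
      (fun x => ((fun x => (pdf1 x).toNNReal) x : ℝ≥0∞)) := rfl
  rw [this, integrable_withDensity_iff_integrable_smul (pdf1_meas.real_toNNReal)]
  constructor <;> intro h <;> refine h.congr (Filter.Eventually.of_forall fun x => ?_) <;>
    simp only [NNReal.smul_def, Real.coe_toNNReal _ (pdf1_nonneg x), smul_eq_mul]

lemma sqrt2pi_pos : 0 < Real.sqrt (2*Real.pi) := Real.sqrt_pos.2 (by positivity)

lemma key_exp (c : ℝ) : ∀ z : ℝ, pdf1 z * Real.exp (c*z) =
    ((Real.sqrt (2*Real.pi))⁻¹ * Real.exp (c^2/2)) * Real.exp (-(1/2)*(z-c)^2) := by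
  intro z
  unfold pdf1
  rw [mul_assoc, ← Real.exp_add, mul_assoc, ← Real.exp_add]
  congr 1
  ring

lemma int_exp (c : ℝ) : Integrable (fun z => pdf1 z * Real.exp (c*z)) := by
  have h : Integrable (fun z : ℝ => Real.exp (-(1/2:ℝ)*z^2)) :=
    integrable_exp_neg_mul_sq (by norm_num)
  have h2 := (h.comp_sub_right c).const_mul ((Real.sqrt (2*Real.pi))⁻¹ * Real.exp (c^2/2))
  exact h2.congr (Filter.Eventually.of_forall fun z => (key_exp c z).symm)

lemma integral_exp_gauss (c : ℝ) :
    ∫ z, pdf1 z * Real.exp (c*z) = Real.exp (c^2/2) := by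
  simp_rw [key_exp c]
  rw [integral_const_mul]
  have h1 : (∫ z : ℝ, Real.exp (-(1/2:ℝ)*(z-c)^2))
      = ∫ z : ℝ, Real.exp (-(1/2:ℝ)*z^2) :=
    integral_sub_right_eq_self (fun z : ℝ => Real.exp (-(1/2:ℝ)*z^2)) c
  rw [h1, integral_gaussian, show Real.pi / (1/2) = 2*Real.pi by ring]
  field_simp

lemma int_abs_gauss : Integrable (fun z => pdf1 z * |z|) := by
  have h : Integrable (fun z : ℝ => z * Real.exp (-(1/2:ℝ)*z^2)) :=
    integrable_mul_exp_neg_mul_sq (by norm_num)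
  have h2 := (h.abs).const_mul ((Real.sqrt (2*Real.pi))⁻¹)
  refine h2.congr (Filter.Eventually.of_forall fun z => ?_)
  show (Real.sqrt (2*Real.pi))⁻¹ * |z * Real.exp (-(1/2:ℝ)*z^2)| = pdf1 z * |z|
  rw [abs_mul, abs_of_nonneg (Real.exp_pos _).le, pdf1]
  ring_nf

lemma integral_Ioi_exp : ∫ z in Set.Ioi (0:ℝ), z * Real.exp (-(1/2:ℝ)*z^2) = 1 := by
  have hderiv : ∀ x ∈ Set.Ici (0:ℝ),
      HasDerivAt (fun z : ℝ => -Real.exp (-(1/2:ℝ)*z^2)) (x * Real.exp (-(1/2:ℝ)*x^2)) x := by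
    intro x _
    have h1 : HasDerivAt (fun z : ℝ => -(1/2:ℝ)*z^2) (-(1/2:ℝ)*(2*x)) x := by
      simpa using (hasDerivAt_pow 2 x).const_mul (-(1/2:ℝ))
    have h2 : HasDerivAt (fun z : ℝ => -Real.exp (-(1/2:ℝ)*z^2))
        (-(Real.exp (-(1/2:ℝ)*x^2) * (-(1/2:ℝ)*(2*x)))) x := (h1.exp).neg
    convert h2 using 1
    ring
  have hint : IntegrableOn (fun x : ℝ => x * Real.exp (-(1/2:ℝ)*x^2)) (Set.Ioi 0) :=
    (integrable_mul_exp_neg_mul_sq (by norm_num : (0:ℝ) < 1/2)).integrableOn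
  have htend : Filter.Tendsto (fun z : ℝ => -Real.exp (-(1/2:ℝ)*z^2)) Filter.atTop (nhds 0) := by
    rw [show (0:ℝ) = -0 by norm_num]
    apply Filter.Tendsto.neg
    apply Real.tendsto_exp_atBot.comp
    exact Filter.tendsto_neg_const_mul_pow_atTop (by norm_num) (by norm_num)
  have := MeasureTheory.integral_Ioi_of_hasDerivAt_of_tendsto' hderiv hint htend
  rw [this]
  norm_num

lemma sqrt_two_div_pi : Real.sqrt (2/Real.pi) = 2 / Real.sqrt (2*Real.pi) := by
  rw [eq_div_iff sqrt2pi_pos.ne', ← Real.sqrt_mul (by positivity) (2*Real.pi),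
    show (2/Real.pi)*(2*Real.pi) = 4 by field_simp; ring,
    show (4:ℝ) = 2^2 by norm_num, Real.sqrt_sq (by norm_num)]

lemma integral_abs_gauss :
    ∫ z, pdf1 z * |z| = Real.sqrt (2/Real.pi) := by
  have e1 : (fun z : ℝ => pdf1 z * |z|) =
      fun z => (fun t => (Real.sqrt (2*Real.pi))⁻¹ * (t * Real.exp (-(1/2:ℝ)*t^2))) |z| := by
    funext z
    simp only [pdf1]
    rw [← sq_abs z]
    ring_nf
  rw [e1, integral_comp_abs (f := fun t => (Real.sqrt (2*Real.pi))⁻¹ * (t * Real.exp (-(1/2:ℝ)*t^2))),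
    integral_const_mul, integral_Ioi_exp, sqrt_two_div_pi]
  field_simp

/-- For Z standard Gaussian, there is C > 0 such that for all a ∈ [−1,1] and
b ∈ [0,1], |E[|e^{a+bZ} − 1|] − b√(2/π)| ≤ C(|a| + b²). -/
theorem gaussian_abs_exp_approx :
    ∃ C : ℝ, 0 < C ∧ ∀ a ∈ Set.Icc (-1:ℝ) 1, ∀ b ∈ Set.Icc (0:ℝ) 1,
      |(∫ z, |Real.exp (a + b*z) - 1| ∂(gaussianReal 0 1))
        - b * Real.sqrt (2/Real.pi)| ≤ C * (|a| + b^2) := by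
  set μ := gaussianReal 0 1 with hμ
  refine ⟨16 * Real.exp 3 + 1, by positivity, ?_⟩
  rintro a ⟨ha1, ha2⟩ b ⟨hb0, hb1⟩
  have ha : |a| ≤ 1 := abs_le.2 ⟨ha1, ha2⟩
  -- basic integrability facts
  have hexp : ∀ c : ℝ, Integrable (fun z => Real.exp (c*z)) μ :=
    fun c => (integrable_gauss_iff _).2 (int_exp c)
  have hexp_val : ∀ c : ℝ, ∫ z, Real.exp (c*z) ∂μ = Real.exp (c^2/2) :=
    fun c => by rw [hμ, integral_gauss]; exact integral_exp_gauss c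
  have hZabs : Integrable (fun z => |z|) μ := (integrable_gauss_iff _).2 int_abs_gauss
  have hZabs_val : ∫ z, |z| ∂μ = Real.sqrt (2/Real.pi) := by
    rw [hμ, integral_gauss]; exact integral_abs_gauss
  have hZ : Integrable (fun z : ℝ => z) μ :=
    hZabs.mono' measurable_id.aestronglyMeasurable
      (Filter.Eventually.of_forall fun z => le_of_eq (Real.norm_eq_abs z))
  have hf1 : Integrable (fun z => |Real.exp (a + b*z) - 1|) μ := by
    have he : Integrable (fun z => Real.exp (a + b*z)) μ := by
      refine ((hexp b).const_mul (Real.exp a)).congr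
        (Filter.Eventually.of_forall fun z => ?_)
      show Real.exp a * Real.exp (b*z) = Real.exp (a + b*z)
      rw [← Real.exp_add]
    exact (he.sub (integrable_const 1)).abs
  have hf2 : Integrable (fun z => |a + b*z|) μ :=
    ((integrable_const a).add (hZ.const_mul b)).abs
  have hf3 : Integrable (fun z => |b*z|) μ := (hZ.const_mul b).abs
  have hm2 : Integrable (fun z => Real.exp (-(2*z))) μ :=
    (hexp (-2)).congr (Filter.Eventually.of_forall fun z =>
      show Real.exp ((-2)*z) = Real.exp (-(2*z)) by rw [neg_mul])
  have hSum : Integrable (fun z => Real.exp (2*z) + Real.exp (-(2*z))) μ := (hexp 2).add hm2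
  have hSum_val : ∫ z, (Real.exp (2*z) + Real.exp (-(2*z))) ∂μ = 2 * Real.exp 2 := by
    rw [integral_add (hexp 2) hm2]
    have h1 : (fun z : ℝ => Real.exp (-(2*z))) = fun z => Real.exp ((-2)*z) := by
      funext z; rw [neg_mul]
    rw [h1, hexp_val, hexp_val]
    norm_num
    ring_nf
  have hG : Integrable (fun z => 8 * Real.exp 1 * (a^2+b^2) *
      (Real.exp (2*z) + Real.exp (-(2*z)))) μ := hSum.const_mul _
  have hG_val : ∫ z, 8 * Real.exp 1 * (a^2+b^2) *
      (Real.exp (2*z) + Real.exp (-(2*z))) ∂μ = 16 * Real.exp 3 * (a^2+b^2) := by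
    rw [integral_const_mul, hSum_val, show (3:ℝ) = 1 + 2 by norm_num, Real.exp_add]
    ring
  -- step 1
  have step1 : |(∫ z, |Real.exp (a + b*z) - 1| ∂μ) - ∫ z, |a + b*z| ∂μ|
      ≤ 16 * Real.exp 3 * (a^2+b^2) := by
    rw [← integral_sub hf1 hf2]
    calc |∫ z, (|Real.exp (a + b*z) - 1| - |a + b*z|) ∂μ|
        ≤ ∫ z, ‖|Real.exp (a + b*z) - 1| - |a + b*z|‖ ∂μ := by
          rw [← Real.norm_eq_abs]; exact norm_integral_le_integral_norm _
      _ ≤ ∫ z, 8 * Real.exp 1 * (a^2+b^2) * (Real.exp (2*z) + Real.exp (-(2*z))) ∂μ := by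
          refine integral_mono ((hf1.sub hf2).norm) hG fun z => ?_
          calc ‖|Real.exp (a + b*z) - 1| - |a + b*z|‖
              ≤ |Real.exp (a + b*z) - 1 - (a + b*z)| := by
                rw [Real.norm_eq_abs]
                exact abs_abs_sub_abs_le_abs_sub _ _
            _ ≤ _ := P a b z ha hb0 hb1
      _ = 16 * Real.exp 3 * (a^2+b^2) := hG_val
  -- step 2
  have step2 : |(∫ z, |a + b*z| ∂μ) - ∫ z, |b*z| ∂μ| ≤ |a| := by
    rw [← integral_sub hf2 hf3]
    calc |∫ z, (|a + b*z| - |b*z|) ∂μ|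
        ≤ ∫ z, ‖|a + b*z| - |b*z|‖ ∂μ := by
          rw [← Real.norm_eq_abs]; exact norm_integral_le_integral_norm _
      _ ≤ ∫ _z, |a| ∂μ := by
          refine integral_mono ((hf2.sub hf3).norm) (integrable_const _) fun z => ?_
          rw [Real.norm_eq_abs]
          refine (abs_abs_sub_abs_le_abs_sub _ _).trans ?_
          rw [add_sub_cancel_right]
      _ = |a| := by rw [integral_const]; simp [hμ]
  have hK : ∫ z, |b*z| ∂μ = b * Real.sqrt (2/Real.pi) := by
    have : (fun z : ℝ => |b*z|) = fun z => b * |z| := by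
      funext z; rw [abs_mul, abs_of_nonneg hb0]
    rw [this, integral_const_mul, hZabs_val]
  have ha2' : a^2 ≤ |a| := by
    nlinarith [abs_nonneg a, sq_abs a]
  have hE3 : (0:ℝ) < Real.exp 3 := Real.exp_pos 3
  have key : |(∫ z, |Real.exp (a + b*z) - 1| ∂μ) - b * Real.sqrt (2/Real.pi)|
      ≤ 16 * Real.exp 3 * (a^2+b^2) + |a| := by
    rw [← hK]
    calc |(∫ z, |Real.exp (a + b*z) - 1| ∂μ) - ∫ z, |b*z| ∂μ|
        = |((∫ z, |Real.exp (a + b*z) - 1| ∂μ) - ∫ z, |a + b*z| ∂μ)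
            + ((∫ z, |a + b*z| ∂μ) - ∫ z, |b*z| ∂μ)| := by congr 1; ring
      _ ≤ _ := (abs_add_le _ _).trans (add_le_add step1 step2)
  refine key.trans ?_
  have h1 : 16 * Real.exp 3 * (a^2+b^2) ≤ 16 * Real.exp 3 * (|a|+b^2) :=
    mul_le_mul_of_nonneg_left (by linarith) (by positivity)
  nlinarith [abs_nonneg a, sq_nonneg b]
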